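/- Let ε ∈ (0,1/2) and δ ∈ (0,1/2]. Let X_1, X_2, … be i.i.d. Bernoulli random variables with mean 1/2 + ε (the indicator that arm b_i wins the t-th duel against arm b_j). Let P̂_n = (1/n)·Σ_{t=1}^n X_t, c_n = √(log(1/δ)/n), n_max = ⌈(4/ε²)·log(1/δ)⌉, and let τ = min{ n ≥ 1 : |P̂_n − 1/2| > c_n } be the first time the confidence interval excludes 1/2. Then with probability at least 1 − (n_max + 1)·δ², the procedure stops within n_max comparisons and identifies the correct winner: P( τ ≤ n_max and P̂_τ > 1/2 ) ≥ 1 − (n_max + 1)·δ². -/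

import Mathlib

open MeasureTheory ProbabilityTheory

lemma swi_exp_aux {y : ℝ} (hy : 0 ≤ y) : Real.exp y - 1 ≤ (y / 2) * (Real.exp y + 1) := by
  set f : ℝ → ℝ := fun y => (y / 2) * (Real.exp y + 1) - (Real.exp y - 1) with hf
  have hderiv : ∀ x : ℝ, HasDerivAt f ((1 / 2) * (Real.exp x + 1) + (x / 2) * Real.exp x - Real.exp x) x := by
    intro x
    have h1 : HasDerivAt (fun y : ℝ => (y / 2) * (Real.exp y + 1))
        ((1 / 2) * (Real.exp x + 1) + (x / 2) * Real.exp x) x := by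
      have := ((hasDerivAt_id x).div_const 2).mul ((Real.hasDerivAt_exp x).add_const 1)
      simpa [Pi.mul_def] using this
    simpa [hf, Pi.sub_def] using h1.sub ((Real.hasDerivAt_exp x).sub_const 1)
  have hmono : MonotoneOn f (Set.Ici (0 : ℝ)) := by
    apply monotoneOn_of_hasDerivWithinAt_nonneg (convex_Ici 0)
      (fun x _ => (hderiv x).continuousAt.continuousWithinAt)
      (fun x _ => (hderiv x).hasDerivWithinAt)
    intro x hx
    rw [interior_Ici] at hx
    have hx0 : (0 : ℝ) ≤ x := le_of_lt hx
    have h1 : (-x + 1) * Real.exp x ≤ 1 := by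
      calc (-x + 1) * Real.exp x ≤ Real.exp (-x) * Real.exp x :=
            mul_le_mul_of_nonneg_right (Real.add_one_le_exp (-x)) (Real.exp_pos x).le
        _ = 1 := by rw [← Real.exp_add]; simp
    nlinarith [Real.exp_pos x]
  have h0 : f 0 = 0 := by simp [hf]
  have := hmono (Set.self_mem_Ici) hy hy
  rw [h0] at this
  simp only [hf] at this
  linarith

lemma swi_key_ratio {p t : ℝ} (hp0 : 0 ≤ p) (hp1 : p ≤ 1) (ht : 0 ≤ t) :
    p * Real.exp t ≤ (p + t / 4) * (1 - p + p * Real.exp t) := by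
  set w : ℝ := Real.exp (t / 2) with hwdef
  have hw1 : 1 ≤ w := Real.one_le_exp (by linarith)
  have hwsq : Real.exp t = w ^ 2 := by
    rw [hwdef, sq, ← Real.exp_add]; norm_num
  have hA : w - 1 ≤ (t / 4) * (w + 1) := by
    have := swi_exp_aux (y := t / 2) (by linarith)
    rw [← hwdef] at this
    nlinarith
  have hB : p * (1 - p) * (w + 1) ^ 2 ≤ 1 - p + p * w ^ 2 := by
    nlinarith [sq_nonneg (p * (w + 1) - 1)]
  have hD0 : 0 ≤ 1 - p + p * w ^ 2 := by nlinarith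
  have h1 : (p * (1 - p) * (w + 1) ^ 2) * (w - 1) ≤ (1 - p + p * w ^ 2) * (w - 1) :=
    mul_le_mul_of_nonneg_right hB (by linarith)
  have h2 : (w - 1) * (1 - p + p * w ^ 2) ≤ ((t / 4) * (w + 1)) * (1 - p + p * w ^ 2) :=
    mul_le_mul_of_nonneg_right hA hD0
  have h3 : (p * (1 - p) * (w ^ 2 - 1)) * (w + 1) ≤ ((t / 4) * (1 - p + p * w ^ 2)) * (w + 1) := by
    nlinarith [h1, h2]
  have h4 := le_of_mul_le_mul_right h3 (show (0 : ℝ) < w + 1 by linarith)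
  rw [hwsq]
  nlinarith [h4]

lemma swi_key_ratio_neg {p t : ℝ} (hp0 : 0 ≤ p) (hp1 : p ≤ 1) (ht : t ≤ 0) :
    (p + t / 4) * (1 - p + p * Real.exp t) ≤ p * Real.exp t := by
  have h := swi_key_ratio (p := 1 - p) (t := -t) (by linarith) (by linarith) (by linarith)
  have h2 := mul_le_mul_of_nonneg_right h (Real.exp_pos t).le
  have hinv : Real.exp (-t) * Real.exp t = 1 := by rw [← Real.exp_add]; simp
  have e1 : (1 - p) * Real.exp (-t) * Real.exp t = (1 - p) := by
    rw [mul_assoc, hinv, mul_one]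
  have e2 : (1 - p + -t / 4) * (1 - (1 - p) + (1 - p) * Real.exp (-t)) * Real.exp t
      = (1 - p + -t / 4) * (p * Real.exp t + (1 - p)) := by
    linear_combination (1 - p + -t / 4) * (1 - p) * hinv
  have h2' : (1 - p) ≤ (1 - p + -t / 4) * (p * Real.exp t + (1 - p)) := by
    calc (1 - p) = (1 - p) * Real.exp (-t) * Real.exp t := e1.symm
      _ ≤ (1 - p + -t / 4) * (1 - (1 - p) + (1 - p) * Real.exp (-t)) * Real.exp t := h2
      _ = _ := e2
  nlinarith [h2']

lemma swi_bernoulli_mgf_le {p : ℝ} (hp0 : 0 ≤ p) (hp1 : p ≤ 1) (t : ℝ) :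
    1 - p + p * Real.exp t ≤ Real.exp (p * t + t ^ 2 / 8) := by
  have hD : ∀ s : ℝ, 0 < 1 - p + p * Real.exp s := by
    intro s
    rcases eq_or_lt_of_le hp0 with h | h
    · simp [← h]
    · nlinarith [Real.exp_pos s, mul_pos h (Real.exp_pos s)]
  set ψ : ℝ → ℝ := fun s => p * s + s ^ 2 / 8 - Real.log (1 - p + p * Real.exp s) with hψ
  have hderiv : ∀ s : ℝ, HasDerivAt ψ
      (p + s / 4 - p * Real.exp s / (1 - p + p * Real.exp s)) s := by
    intro s
    have hinner : HasDerivAt (fun s : ℝ => 1 - p + p * Real.exp s) (p * Real.exp s) s :=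
      ((Real.hasDerivAt_exp s).const_mul p).const_add (1 - p)
    have hlog : HasDerivAt (fun s : ℝ => Real.log (1 - p + p * Real.exp s))
        (p * Real.exp s / (1 - p + p * Real.exp s)) s := by
      have := (Real.hasDerivAt_log (hD s).ne').comp s hinner
      simpa [div_eq_inv_mul, Function.comp_def] using this
    have hpoly : HasDerivAt (fun s : ℝ => p * s + s ^ 2 / 8) (p + s / 4) s := by
      have h1 : HasDerivAt (fun s : ℝ => p * s) p s := by
        simpa using (hasDerivAt_id s).const_mul p
      have h2 : HasDerivAt (fun s : ℝ => s ^ 2 / 8) (s / 4) s := by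
        have := (hasDerivAt_pow 2 s).div_const 8
        norm_num at this
        rw [show s / 4 = 2 * s / 8 by ring]
        exact this
      exact h1.add h2
    exact hpoly.sub hlog
  have hψ0 : ψ 0 = 0 := by simp [hψ]
  have hnonneg : ∀ s : ℝ, 0 ≤ ψ s := by
    intro s
    rcases le_total 0 s with hs | hs
    · have hmono : MonotoneOn ψ (Set.Ici (0 : ℝ)) := by
        apply monotoneOn_of_hasDerivWithinAt_nonneg (convex_Ici 0)
          (fun x _ => (hderiv x).continuousAt.continuousWithinAt)
          (fun x _ => (hderiv x).hasDerivWithinAt)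
        intro x hx
        rw [interior_Ici] at hx
        have hkey := swi_key_ratio hp0 hp1 (le_of_lt hx)
        have := (div_le_iff₀ (hD x)).mpr hkey
        linarith
      have := hmono Set.self_mem_Ici hs hs
      rw [hψ0] at this; exact this
    · have hanti : AntitoneOn ψ (Set.Iic (0 : ℝ)) := by
        apply antitoneOn_of_hasDerivWithinAt_nonpos (convex_Iic 0)
          (fun x _ => (hderiv x).continuousAt.continuousWithinAt)
          (fun x _ => (hderiv x).hasDerivWithinAt)
        intro x hx
        rw [interior_Iic] at hx
        have hkey := swi_key_ratio_neg hp0 hp1 (le_of_lt hx)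
        have := (le_div_iff₀ (hD x)).mpr hkey
        linarith
      have := hanti hs Set.self_mem_Iic hs
      rw [hψ0] at this; exact this
  have hlogle : Real.log (1 - p + p * Real.exp t) ≤ p * t + t ^ 2 / 8 := by
    have := hnonneg t
    simp only [hψ] at this
    linarith
  calc 1 - p + p * Real.exp t = Real.exp (Real.log (1 - p + p * Real.exp t)) :=
        (Real.exp_log (hD t)).symm
    _ ≤ Real.exp (p * t + t ^ 2 / 8) := Real.exp_le_exp.mpr hlogle

lemma swi_chernoff
    {Ω : Type*} [MeasurableSpace Ω] (μ : Measure Ω) [IsProbabilityMeasure μ]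
    (ε δ : ℝ) (hε0 : 0 < ε) (hε2 : ε < 1 / 2) (hδ0 : 0 < δ) (hδ1 : δ ≤ 1 / 2)
    (X : ℕ → Ω → Bool)
    (hmeas : ∀ t, Measurable (X t))
    (hdist : ∀ t, μ.map (X t) =
      (PMF.bernoulli (Real.toNNReal (1 / 2 + ε))
        (by rw [Real.toNNReal_le_one]; linarith)).toMeasure)
    (hindep : iIndepFun X μ)
    (n : ℕ) (hn : 1 ≤ n) :
    μ {ω | (∑ i ∈ Finset.range n, if X i ω then (1 : ℝ) else 0) ≤
        n * (1 / 2 + ε) - Real.sqrt (n * Real.log (1 / δ))} ≤ ENNReal.ofReal (δ ^ 2) := by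
  have hp0 : (0 : ℝ) ≤ 1 / 2 + ε := by linarith
  have hp1 : (1 / 2 + ε : ℝ) ≤ 1 := by linarith
  set L : ℝ := Real.log (1 / δ) with hLdef
  have hL0 : 0 < L := Real.log_pos (by rw [lt_div_iff₀ hδ0]; linarith)
  set Y : ℕ → Ω → ℝ := fun i ω => if X i ω then (1 : ℝ) else 0 with hYdef
  have hYmeas : ∀ i, Measurable (Y i) := fun i =>
    (Measurable.of_discrete (f := fun b : Bool => if b then (1 : ℝ) else 0)).comp (hmeas i)
  have hYindep : iIndepFun Y μ :=
    hindep.comp (fun _ (b : Bool) => if b then (1 : ℝ) else 0) fun _ => Measurable.of_discrete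
  -- the mgf of each Y i
  have hmgf : ∀ (i : ℕ) (t : ℝ),
      mgf (Y i) μ t = 1 - (1 / 2 + ε) + (1 / 2 + ε) * Real.exp t := by
    intro i t
    have hg : Measurable fun b : Bool => Real.exp (t * if b then (1 : ℝ) else 0) :=
      Measurable.of_discrete
    have : mgf (Y i) μ t
        = ∫ b, Real.exp (t * if b then (1 : ℝ) else 0) ∂(μ.map (X i)) := by
      rw [integral_map (hmeas i).aemeasurable hg.aestronglyMeasurable]
      rfl
    rw [this, hdist i, PMF.integral_eq_sum]
    rw [Fintype.sum_bool]
    have h1 : ((PMF.bernoulli (Real.toNNReal (1 / 2 + ε))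
        (by rw [Real.toNNReal_le_one]; linarith)) true).toReal = 1 / 2 + ε := by
      rw [PMF.bernoulli_apply]
      simp only [Bool.cond_true]
      rw [ENNReal.coe_toReal, Real.coe_toNNReal _ hp0]
    have h2 : ((PMF.bernoulli (Real.toNNReal (1 / 2 + ε))
        (by rw [Real.toNNReal_le_one]; linarith)) false).toReal = 1 - (1 / 2 + ε) := by
      rw [PMF.bernoulli_apply]
      simp only [Bool.cond_false]
      rw [ENNReal.coe_toReal, NNReal.coe_sub (by rw [Real.toNNReal_le_one]; linarith)]
      rw [NNReal.coe_one, Real.coe_toNNReal _ hp0]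
    rw [h1, h2]
    simp [smul_eq_mul]
    ring
  -- choose t
  set s : ℝ := Real.sqrt (n * L) with hsdef
  have hs0 : 0 < s := Real.sqrt_pos.mpr (by positivity)
  have hs2 : s ^ 2 = n * L := Real.sq_sqrt (by positivity)
  have hn0 : (0 : ℝ) < n := by exact_mod_cast hn
  set t : ℝ := -(4 * s / n) with htdef
  have ht : t ≤ 0 := by
    rw [htdef]
    simp only [neg_nonpos]
    positivity
  -- integrability
  have hSm : Measurable fun ω => ∑ i ∈ Finset.range n, Y i ω :=
    Finset.measurable_sum _ fun i _ => hYmeas i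
  have hSfun : (∑ i ∈ Finset.range n, Y i) = fun ω => ∑ i ∈ Finset.range n, Y i ω := by
    funext ω; exact Finset.sum_apply ω _ _
  have hSbound : ∀ ω, 0 ≤ (∑ i ∈ Finset.range n, Y i ω) ∧ (∑ i ∈ Finset.range n, Y i ω) ≤ n := by
    intro ω
    constructor
    · apply Finset.sum_nonneg; intro i _; rw [hYdef]; positivity
    · calc (∑ i ∈ Finset.range n, Y i ω) ≤ ∑ i ∈ Finset.range n, (1 : ℝ) := by
            apply Finset.sum_le_sum; intro i _
            simp only [hYdef]
            split <;> norm_num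
        _ = n := by simp
  have hint : Integrable (fun ω => Real.exp (t * (∑ i ∈ Finset.range n, Y i) ω)) μ := by
    rw [hSfun]
    apply Integrable.mono' (integrable_const (Real.exp (|t| * n)))
    · exact ((hSm.const_mul t).exp).aestronglyMeasurable
    · refine Filter.Eventually.of_forall fun ω => ?_
      rw [Real.norm_eq_abs, Real.abs_exp, Real.exp_le_exp]
      obtain ⟨h0, h1⟩ := hSbound ω
      calc t * (∑ i ∈ Finset.range n, Y i ω) ≤ |t| * (∑ i ∈ Finset.range n, Y i ω) :=
            mul_le_mul_of_nonneg_right (le_abs_self t) h0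
        _ ≤ |t| * n := mul_le_mul_of_nonneg_left h1 (abs_nonneg t)
  -- Chernoff bound
  have hchain := measure_le_le_exp_mul_mgf (μ := μ) (X := ∑ i ∈ Finset.range n, Y i)
    (↑n * (1 / 2 + ε) - s) ht hint
  rw [hYindep.mgf_sum hYmeas (Finset.range n)] at hchain
  have hprod : (∏ i ∈ Finset.range n, mgf (Y i) μ t)
      = (1 - (1 / 2 + ε) + (1 / 2 + ε) * Real.exp t) ^ n := by
    rw [Finset.prod_congr rfl fun i _ => hmgf i t, Finset.prod_const, Finset.card_range]
  rw [hprod] at hchain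
  have hbase0 : 0 ≤ 1 - (1 / 2 + ε) + (1 / 2 + ε) * Real.exp t := by
    have := Real.exp_pos t
    nlinarith
  have hpow : (1 - (1 / 2 + ε) + (1 / 2 + ε) * Real.exp t) ^ n
      ≤ Real.exp ((1 / 2 + ε) * t + t ^ 2 / 8) ^ n :=
    pow_le_pow_left₀ hbase0 (swi_bernoulli_mgf_le hp0 hp1 t) n
  have hfinal : (μ {ω | (∑ i ∈ Finset.range n, Y i) ω ≤ ↑n * (1 / 2 + ε) - s}).toReal ≤ δ ^ 2 := by
    refine hchain.trans ?_
    calc Real.exp (-t * (↑n * (1 / 2 + ε) - s))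
          * (1 - (1 / 2 + ε) + (1 / 2 + ε) * Real.exp t) ^ n
        ≤ Real.exp (-t * (↑n * (1 / 2 + ε) - s))
          * Real.exp ((1 / 2 + ε) * t + t ^ 2 / 8) ^ n :=
          mul_le_mul_of_nonneg_left hpow (Real.exp_pos _).le
      _ = Real.exp (-t * (↑n * (1 / 2 + ε) - s) + n * ((1 / 2 + ε) * t + t ^ 2 / 8)) := by
          rw [← Real.exp_nat_mul, ← Real.exp_add]
      _ = Real.exp (-(2 * L)) := by
          congr 1
          rw [htdef]
          field_simp
          linear_combination (-32 : ℝ) * hs2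
      _ = δ ^ 2 := by
          rw [hLdef, one_div, Real.log_inv]
          rw [show -(2 * -Real.log δ) = 2 * Real.log δ by ring]
          rw [mul_comm, Real.exp_mul, Real.exp_log hδ0]
          norm_num
  rw [ENNReal.le_ofReal_iff_toReal_le (measure_ne_top μ _) (by positivity)]
  have hseteq : {ω : Ω | (∑ i ∈ Finset.range n, if X i ω then (1 : ℝ) else 0) ≤
      ↑n * (1 / 2 + ε) - Real.sqrt (↑n * Real.log (1 / δ))}
      = {ω | (∑ i ∈ Finset.range n, Y i) ω ≤ ↑n * (1 / 2 + ε) - s} := by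
    ext ω
    simp only [Set.mem_setOf_eq, hSfun]
    exact Iff.rfl
  rw [hseteq]
  exact hfinal

/-- **Sequential (anytime) winner identification between two arms.**
Let `ε ∈ (0, 1/2)` and `δ ∈ (0, 1/2]`.  Let `X 0, X 1, …` be i.i.d. Bernoulli random variables
with mean `1/2 + ε` (`X t` is the indicator that arm `b_i` wins the `t`-th duel against `b_j`).
Let `P̂_n = (1/n)·∑_{t<n} X t`, `c_n = √(log(1/δ)/n)`, `n_max = ⌈(4/ε²)·log(1/δ)⌉`, and let
`τ = min{ n ≥ 1 : |P̂_n − 1/2| > c_n }` be the first time the confidence interval excludes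
`1/2`.  Then with probability at least `1 − (n_max + 1)·δ²` the procedure stops within `n_max`
comparisons and identifies the correct winner:
`P(τ ≤ n_max and P̂_τ > 1/2) ≥ 1 − (n_max + 1)·δ²`.
(The event below states that there is a first time `n ∈ [1, n_max]` at which the confidence
interval excludes `1/2`, and at that time `P̂_n > 1/2`.) -/
theorem sequential_winner_identification
    {Ω : Type*} [MeasurableSpace Ω] (μ : Measure Ω) [IsProbabilityMeasure μ]
    (ε δ : ℝ) (hε : ε ∈ Set.Ioo (0 : ℝ) (1 / 2)) (hδ : δ ∈ Set.Ioc (0 : ℝ) (1 / 2))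
    (X : ℕ → Ω → Bool)
    (hmeas : ∀ t, Measurable (X t))
    (hdist : ∀ t, μ.map (X t) =
      (PMF.bernoulli (Real.toNNReal (1 / 2 + ε))
        (by rw [Real.toNNReal_le_one]; linarith [hε.2])).toMeasure)
    (hindep : iIndepFun X μ) :
    1 - ((⌈(4 / ε ^ 2) * Real.log (1 / δ)⌉₊ : ℝ) + 1) * δ ^ 2 ≤
      (μ {ω : Ω | ∃ n : ℕ, 1 ≤ n ∧ n ≤ ⌈(4 / ε ^ 2) * Real.log (1 / δ)⌉₊ ∧
          (∀ m : ℕ, 1 ≤ m → m < n →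
            |(∑ t ∈ Finset.range m, if X t ω then (1 : ℝ) else 0) / m - 1 / 2| ≤
              Real.sqrt (Real.log (1 / δ) / m)) ∧
          Real.sqrt (Real.log (1 / δ) / n) <
            |(∑ t ∈ Finset.range n, if X t ω then (1 : ℝ) else 0) / n - 1 / 2| ∧
          1 / 2 < (∑ t ∈ Finset.range n, if X t ω then (1 : ℝ) else 0) / n}).toReal := by
  obtain ⟨hε0, hε2⟩ := hε
  obtain ⟨hδ0, hδ1⟩ := hδ
  classical
  set L : ℝ := Real.log (1 / δ) with hLdef
  set N : ℕ := ⌈(4 / ε ^ 2) * L⌉₊ with hNdef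
  have hL0 : 0 < L := Real.log_pos (by rw [lt_div_iff₀ hδ0]; linarith)
  have hNreal : (4 / ε ^ 2) * L ≤ (N : ℝ) := Nat.le_ceil _
  have hN1 : 1 ≤ N := by
    rw [hNdef]
    exact Nat.one_le_iff_ne_zero.mpr (by
      simp only [ne_eq, Nat.ceil_eq_zero, not_le]
      positivity)
  have hN0 : (0 : ℝ) < N := by exact_mod_cast hN1
  set B : ℕ → Set Ω := fun n => {ω | (∑ i ∈ Finset.range n, if X i ω then (1 : ℝ) else 0) ≤
      n * (1 / 2 + ε) - Real.sqrt (n * L)} with hBdef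
  have hchern : ∀ n ∈ Finset.Icc 1 N, μ (B n) ≤ ENNReal.ofReal (δ ^ 2) := by
    intro n hn
    exact swi_chernoff μ ε δ hε0 hε2 hδ0 hδ1 X hmeas hdist hindep n (Finset.mem_Icc.mp hn).1
  have hUB : μ (⋃ n ∈ Finset.Icc 1 N, B n) ≤ (N : ENNReal) * ENNReal.ofReal (δ ^ 2) := by
    refine (measure_biUnion_finset_le _ _).trans ?_
    calc ∑ n ∈ Finset.Icc 1 N, μ (B n) ≤ ∑ n ∈ Finset.Icc 1 N, ENNReal.ofReal (δ ^ 2) :=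
          Finset.sum_le_sum hchern
      _ = (N : ENNReal) * ENNReal.ofReal (δ ^ 2) := by
          rw [Finset.sum_const, Nat.card_Icc]
          simp [nsmul_eq_mul]
  -- helper: sqrt (n L) = n * sqrt (L / n)
  have hsqrt_div : ∀ n : ℕ, 1 ≤ n → Real.sqrt (n * L) = n * Real.sqrt (L / n) := by
    intro n hn
    have hn0 : (0 : ℝ) < n := by exact_mod_cast hn
    rw [show (n : ℝ) * L = (n : ℝ) ^ 2 * (L / n) by field_simp,
      Real.sqrt_mul (by positivity) (L / n), Real.sqrt_sq hn0.le]
  -- deterministic inclusion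
  have hincl : ∀ ω : Ω, ω ∉ (⋃ n ∈ Finset.Icc 1 N, B n) →
      ω ∈ {ω : Ω | ∃ n : ℕ, 1 ≤ n ∧ n ≤ N ∧
          (∀ m : ℕ, 1 ≤ m → m < n →
            |(∑ t ∈ Finset.range m, if X t ω then (1 : ℝ) else 0) / m - 1 / 2| ≤
              Real.sqrt (L / m)) ∧
          Real.sqrt (L / n) <
            |(∑ t ∈ Finset.range n, if X t ω then (1 : ℝ) else 0) / n - 1 / 2| ∧
          1 / 2 < (∑ t ∈ Finset.range n, if X t ω then (1 : ℝ) else 0) / n} := by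
    intro ω hω
    have hgt : ∀ n : ℕ, 1 ≤ n → n ≤ N →
        (n : ℝ) * (1 / 2 + ε) - Real.sqrt (n * L) <
          ∑ i ∈ Finset.range n, if X i ω then (1 : ℝ) else 0 := by
      intro n h1 h2
      have : ω ∉ B n := fun h => hω (Set.mem_biUnion (Finset.mem_Icc.mpr ⟨h1, h2⟩) h)
      rw [hBdef] at this
      exact not_le.mp this
    -- bound at N
    have hsN : Real.sqrt (N * L) ≤ N * ε / 2 := by
      have hNe : (4 : ℝ) * L ≤ N * ε ^ 2 := by
        have h3 := mul_le_mul_of_nonneg_right hNreal (le_of_lt (show (0:ℝ) < ε ^ 2 by positivity))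
        calc (4 : ℝ) * L = 4 / ε ^ 2 * L * ε ^ 2 := by field_simp
          _ ≤ N * ε ^ 2 := h3
      have h1 : (N : ℝ) * L ≤ (N * ε / 2) ^ 2 := by nlinarith [hN0.le]
      calc Real.sqrt (N * L) ≤ Real.sqrt ((N * ε / 2) ^ 2) := Real.sqrt_le_sqrt h1
        _ = N * ε / 2 := Real.sqrt_sq (by positivity)
    have hPhatN : Real.sqrt (L / N) <
        (∑ t ∈ Finset.range N, if X t ω then (1 : ℝ) else 0) / N - 1 / 2 := by
      have hgtN := hgt N hN1 le_rfl
      rw [hsqrt_div N hN1] at hgtN hsN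
      rw [lt_sub_iff_add_lt, lt_div_iff₀ hN0]
      nlinarith [hgtN, hsN]
    have hPN : Real.sqrt (L / N) <
        |(∑ t ∈ Finset.range N, if X t ω then (1 : ℝ) else 0) / N - 1 / 2| :=
      lt_of_lt_of_le hPhatN (le_abs_self _)
    have hex : ∃ n : ℕ, 1 ≤ n ∧ Real.sqrt (L / n) <
        |(∑ t ∈ Finset.range n, if X t ω then (1 : ℝ) else 0) / n - 1 / 2| := ⟨N, hN1, hPN⟩
    set n₀ : ℕ := Nat.find hex with hn₀def
    obtain ⟨hn₀1, hn₀abs⟩ := Nat.find_spec hex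
    have hn₀N : n₀ ≤ N := Nat.find_min' hex ⟨hN1, hPN⟩
    have hn₀pos : 0 < n₀ := hn₀1
    have hn₀0 : (0 : ℝ) < n₀ := by exact_mod_cast hn₀pos
    refine ⟨n₀, hn₀1, hn₀N, ?_, hn₀abs, ?_⟩
    · intro m hm1 hmn
      by_contra hcon
      exact Nat.find_min hex hmn ⟨hm1, not_le.mp hcon⟩
    · -- correct side
      have hgt₀ := hgt n₀ hn₀1 hn₀N
      rw [hsqrt_div n₀ hn₀1] at hgt₀
      have hlow : 1 / 2 - Real.sqrt (L / n₀) <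
          (∑ t ∈ Finset.range n₀, if X t ω then (1 : ℝ) else 0) / n₀ := by
        rw [sub_lt_iff_lt_add, div_add' _ _ _ (ne_of_gt hn₀0)]
        rw [lt_div_iff₀ hn₀0]
        nlinarith [hgt₀]
      rcases abs_cases
          ((∑ t ∈ Finset.range n₀, if X t ω then (1 : ℝ) else 0) / n₀ - 1 / 2) with h | h
      · have := Real.sqrt_nonneg (L / n₀)
        linarith [hn₀abs, h.1]
      · rw [h.1] at hn₀abs
        linarith [hn₀abs, hlow]
  -- put everything together
  have hsub : (Set.univ : Set Ω) ⊆
      {ω : Ω | ∃ n : ℕ, 1 ≤ n ∧ n ≤ N ∧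
          (∀ m : ℕ, 1 ≤ m → m < n →
            |(∑ t ∈ Finset.range m, if X t ω then (1 : ℝ) else 0) / m - 1 / 2| ≤
              Real.sqrt (L / m)) ∧
          Real.sqrt (L / n) <
            |(∑ t ∈ Finset.range n, if X t ω then (1 : ℝ) else 0) / n - 1 / 2| ∧
          1 / 2 < (∑ t ∈ Finset.range n, if X t ω then (1 : ℝ) else 0) / n}
        ∪ ⋃ n ∈ Finset.Icc 1 N, B n := by
    intro ω _
    by_cases h : ω ∈ ⋃ n ∈ Finset.Icc 1 N, B n
    · exact Or.inr h
    · exact Or.inl (hincl ω h)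
  have h1 : (1 : ENNReal) ≤ μ {ω : Ω | ∃ n : ℕ, 1 ≤ n ∧ n ≤ N ∧
          (∀ m : ℕ, 1 ≤ m → m < n →
            |(∑ t ∈ Finset.range m, if X t ω then (1 : ℝ) else 0) / m - 1 / 2| ≤
              Real.sqrt (L / m)) ∧
          Real.sqrt (L / n) <
            |(∑ t ∈ Finset.range n, if X t ω then (1 : ℝ) else 0) / n - 1 / 2| ∧
          1 / 2 < (∑ t ∈ Finset.range n, if X t ω then (1 : ℝ) else 0) / n}
        + (N : ENNReal) * ENNReal.ofReal (δ ^ 2) := by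
    calc (1 : ENNReal) = μ Set.univ := measure_univ.symm
      _ ≤ μ (_ ∪ ⋃ n ∈ Finset.Icc 1 N, B n) := measure_mono hsub
      _ ≤ μ _ + μ (⋃ n ∈ Finset.Icc 1 N, B n) := measure_union_le _ _
      _ ≤ _ := add_le_add_right hUB _
  have hfin : (N : ENNReal) * ENNReal.ofReal (δ ^ 2) ≠ ⊤ :=
    ENNReal.mul_ne_top (ENNReal.natCast_ne_top N) ENNReal.ofReal_ne_top
  have h2 := ENNReal.toReal_mono (by
      exact ENNReal.add_ne_top.mpr ⟨measure_ne_top _ _, hfin⟩) h1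
  rw [ENNReal.toReal_add (measure_ne_top _ _) hfin, ENNReal.toReal_mul,
    ENNReal.toReal_natCast, ENNReal.toReal_ofReal (by positivity), ENNReal.toReal_one] at h2
  have hδsq : 0 ≤ δ ^ 2 := sq_nonneg δ
  linarith [h2]
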